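/- Let A ∈ ℝ^{p×p}, B ∈ ℝ^{p×m}, C ∈ ℝ^{q×p}, D ∈ ℝ^{q×m}, M a symmetric (q+m)×(q+m) matrix, and τ ∈ (0,1). Suppose there exists P ≻ 0 such that [[AᵀPA - τ²P, AᵀPB],[BᵀPA, BᵀPB]] + [C D; 0 I]ᵀ M [C D; 0 I] ⪯ 0. If the sequences ξ, u, v satisfy ξ^{k+1} = Aξ^k + Bu^k, v^k = Cξ^k + Du^k, and the pointwise quadratic constraint [v^k - v⋆; u^k - u⋆]ᵀ M [v^k - v⋆; u^k - u⋆] ≥ 0 for all k, where (ξ⋆, u⋆, v⋆) is a fixed point (ξ⋆ = Aξ⋆ + Bu⋆, v⋆ = Cξ⋆ + Du⋆), then ‖ξ^k - ξ⋆‖_P ≤ τ^k ‖ξ^0 - ξ⋆‖_P for all k, where ‖x‖_P² = xᵀPx. -/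

import Mathlib

open Matrix

private lemma stmt15_quad {p m : ℕ} (τ : ℝ)
    (A : Matrix (Fin p) (Fin p) ℝ) (B : Matrix (Fin p) (Fin m) ℝ)
    (P : Matrix (Fin p) (Fin p) ℝ) (e : Fin p → ℝ) (w : Fin m → ℝ) :
    Sum.elim e w ⬝ᵥ (Matrix.fromBlocks (Aᵀ * P * A - τ ^ 2 • P) (Aᵀ * P * B) (Bᵀ * P * A)
        (Bᵀ * P * B)).mulVec (Sum.elim e w)
      = (A.mulVec e + B.mulVec w) ⬝ᵥ P.mulVec (A.mulVec e + B.mulVec w)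
        - τ ^ 2 * (e ⬝ᵥ P.mulVec e) := by
  simp only [Matrix.fromBlocks_mulVec, sumElim_dotProduct_sumElim,
    Matrix.sub_mulVec, Matrix.add_mulVec, Matrix.mulVec_add, Matrix.smul_mulVec,
    dotProduct_add, dotProduct_sub, dotProduct_smul,
    ← Matrix.mulVec_mulVec, Matrix.dotProduct_mulVec, Matrix.vecMul_transpose,
    smul_eq_mul, Sum.elim_comp_inl, Sum.elim_comp_inr, Matrix.add_vecMul,
    add_dotProduct]
  ring

/-- IQC convergence theorem (Lessard et al.): if there exists `P ≻ 0` satisfying the LMI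
`[[AᵀPA - τ²P, AᵀPB],[BᵀPA, BᵀPB]] + [C D; 0 I]ᵀ M [C D; 0 I] ⪯ 0`, and the iterates satisfy
the dynamics and the pointwise IQC with matrix `M` about a fixed point `(ξ⋆, u⋆, v⋆)`, then
`‖ξ^k - ξ⋆‖_P ≤ τ^k ‖ξ^0 - ξ⋆‖_P` for all `k`. -/
theorem stmt15 {p m q : ℕ} (τ : ℝ) (hτ0 : 0 < τ) (hτ1 : τ < 1)
    (A : Matrix (Fin p) (Fin p) ℝ) (B : Matrix (Fin p) (Fin m) ℝ)
    (C : Matrix (Fin q) (Fin p) ℝ) (D : Matrix (Fin q) (Fin m) ℝ)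
    (M : Matrix (Fin q ⊕ Fin m) (Fin q ⊕ Fin m) ℝ) (hM : Mᵀ = M)
    (P : Matrix (Fin p) (Fin p) ℝ) (hP : P.PosDef)
    (hLMI : (-(Matrix.fromBlocks (Aᵀ * P * A - τ ^ 2 • P) (Aᵀ * P * B) (Bᵀ * P * A) (Bᵀ * P * B)
      + (Matrix.fromBlocks C D 0 (1 : Matrix (Fin m) (Fin m) ℝ))ᵀ * M * (Matrix.fromBlocks C D 0 1))).PosSemidef)
    (ξ : ℕ → Fin p → ℝ) (u : ℕ → Fin m → ℝ) (v : ℕ → Fin q → ℝ)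
    (ξs : Fin p → ℝ) (us : Fin m → ℝ) (vs : Fin q → ℝ)
    (hdyn : ∀ k, ξ (k + 1) = A.mulVec (ξ k) + B.mulVec (u k))
    (hout : ∀ k, v k = C.mulVec (ξ k) + D.mulVec (u k))
    (hfixξ : ξs = A.mulVec ξs + B.mulVec us)
    (hfixv : vs = C.mulVec ξs + D.mulVec us)
    (hIQC : ∀ k, 0 ≤ dotProduct (Sum.elim (v k - vs) (u k - us))
      (M.mulVec (Sum.elim (v k - vs) (u k - us)))) :
    ∀ k, Real.sqrt (dotProduct (ξ k - ξs) (P.mulVec (ξ k - ξs)))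
      ≤ τ ^ k * Real.sqrt (dotProduct (ξ 0 - ξs) (P.mulVec (ξ 0 - ξs))) := by
  set e : ℕ → Fin p → ℝ := fun k => ξ k - ξs with he_def
  set w : ℕ → Fin m → ℝ := fun k => u k - us with hw_def
  have he : ∀ k, e (k + 1) = A.mulVec (e k) + B.mulVec (w k) := by
    intro k
    show ξ (k + 1) - ξs = _
    rw [hdyn k]
    conv_lhs => rw [hfixξ]
    simp only [he_def, hw_def, Matrix.mulVec_sub]
    abel
  have hv : ∀ k, v k - vs = C.mulVec (e k) + D.mulVec (w k) := by
    intro k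
    rw [hout k]
    conv_lhs => rw [hfixv]
    simp only [he_def, hw_def, Matrix.mulVec_sub]
    abel
  have key : ∀ k, dotProduct (e (k + 1)) (P.mulVec (e (k + 1)))
      ≤ τ ^ 2 * dotProduct (e k) (P.mulVec (e k)) := by
    intro k
    set z : Fin p ⊕ Fin m → ℝ := Sum.elim (e k) (w k) with hz
    have hpsd := hLMI.dotProduct_mulVec_nonneg z
    simp only [star_trivial, RCLike.re_to_real, Matrix.neg_mulVec,
      dotProduct_neg] at hpsd
    have hsum : z ⬝ᵥ ((Matrix.fromBlocks (Aᵀ * P * A - τ ^ 2 • P) (Aᵀ * P * B) (Bᵀ * P * A)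
          (Bᵀ * P * B)
        + (Matrix.fromBlocks C D 0 (1 : Matrix (Fin m) (Fin m) ℝ))ᵀ * M * (Matrix.fromBlocks C D 0 1)).mulVec z) ≤ 0 := by
      linarith
    rw [Matrix.add_mulVec, dotProduct_add] at hsum
    have hNz : (Matrix.fromBlocks C D 0 1).mulVec z = Sum.elim (v k - vs) (w k) := by
      rw [hz, Matrix.fromBlocks_mulVec]
      simp [hv k]
    have hterm2 : z ⬝ᵥ ((Matrix.fromBlocks C D 0 (1 : Matrix (Fin m) (Fin m) ℝ))ᵀ * M
        * (Matrix.fromBlocks C D 0 1)).mulVec z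
        = Sum.elim (v k - vs) (w k) ⬝ᵥ M.mulVec (Sum.elim (v k - vs) (w k)) := by
      change z ⬝ᵥ (Matrix.instHMulOfFintypeOfMulOfAddCommMonoid.hMul (Matrix.instHMulOfFintypeOfMulOfAddCommMonoid.hMul (Matrix.fromBlocks C D 0 (1 : Matrix (Fin m) (Fin m) ℝ))ᵀ M) (Matrix.fromBlocks C D 0 1)).mulVec z = _
      rw [← Matrix.mulVec_mulVec, ← Matrix.mulVec_mulVec, Matrix.dotProduct_mulVec,
        Matrix.vecMul_transpose, hNz]
    have hterm1 := stmt15_quad τ A B P (e k) (w k)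
    rw [← hz] at hterm1
    have hiqc : 0 ≤ Sum.elim (v k - vs) (w k) ⬝ᵥ M.mulVec (Sum.elim (v k - vs) (w k)) :=
      hIQC k
    rw [hterm1] at hsum
    erw [hterm2] at hsum
    rw [he k]
    linarith
  -- nonnegativity of the P-quadratic form
  have hnn : ∀ x : Fin p → ℝ, 0 ≤ x ⬝ᵥ P.mulVec x := by
    intro x
    have := hP.posSemidef.dotProduct_mulVec_nonneg x
    simpa using this
  -- step in terms of sqrt
  have step : ∀ k, Real.sqrt (e (k + 1) ⬝ᵥ P.mulVec (e (k + 1)))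
      ≤ τ * Real.sqrt (e k ⬝ᵥ P.mulVec (e k)) := by
    intro k
    have h1 : Real.sqrt (e (k + 1) ⬝ᵥ P.mulVec (e (k + 1)))
        ≤ Real.sqrt (τ ^ 2 * (e k ⬝ᵥ P.mulVec (e k))) := Real.sqrt_le_sqrt (key k)
    rwa [Real.sqrt_mul (by positivity), Real.sqrt_sq hτ0.le] at h1
  intro k
  induction k with
  | zero => simp
  | succ n ih =>
      calc Real.sqrt (e (n + 1) ⬝ᵥ P.mulVec (e (n + 1)))
          ≤ τ * Real.sqrt (e n ⬝ᵥ P.mulVec (e n)) := step n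
        _ ≤ τ * (τ ^ n * Real.sqrt (e 0 ⬝ᵥ P.mulVec (e 0))) := by
            exact mul_le_mul_of_nonneg_left ih hτ0.le
        _ = τ ^ (n + 1) * Real.sqrt (e 0 ⬝ᵥ P.mulVec (e 0)) := by ring
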